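/- (Correctness of rule [CONCAT].) Let N₁ be the net with places {y₁, y₂} and transitions: a (labeled a) with Post(a,y₁)=1 and no preconditions; a silent transition τ with Pre(τ,y₁)=1, Post(τ,y₂)=1; b (labeled b) with Pre(b,y₁)=1; c (labeled c) with Pre(c,y₂)=1. Let N₂ be the net with single place x and transitions a (Post(a,x)=1), b (Pre(b,x)=1), c (Pre(c,x)=1). With initial markings m₁(y₁)=K, m₁(y₂)=0 and m₂(x)=K, we have (N₁, m₁) ▷_E (N₂, m₂) where E is the single equation x = y₁ + y₂. -/

import Mathlib

/-- A labeled Petri net over a global type `V` of variables/places and labels in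
`L` (`none` is the silent label `τ`).  The net only uses the places in `places`:
the flow functions vanish outside of it. -/
structure LNet (V L : Type) where
  T : Type
  places : Set V
  Pre : T → V → ℕ
  Post : T → V → ℕ
  pre_supp : ∀ t p, p ∉ places → Pre t p = 0
  post_supp : ∀ t p, p ∉ places → Post t p = 0
  label : T → Option L

namespace LNet

variable {V L : Type}

/-- Transition `t` is enabled at marking `m`. -/
def Enabled (N : LNet V L) (m : V → ℕ) (t : N.T) : Prop :=
  ∀ p, N.Pre t p ≤ m p

/-- `m →t m'` : `t` is enabled at `m` and `m' = m - Pre(t) + Post(t)` (pointwise). -/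
def Fire (N : LNet V L) (m : V → ℕ) (t : N.T) (m' : V → ℕ) : Prop :=
  N.Enabled m t ∧ ∀ p, m' p = m p - N.Pre t p + N.Post t p

/-- `m ⇒ρ m'` : the firing sequence `ρ` fires from `m` to `m'`. -/
def FireSeq (N : LNet V L) : (V → ℕ) → List N.T → (V → ℕ) → Prop
  | m, [], m' => m' = m
  | m, t :: ρ, m'' => ∃ m', N.Fire m t m' ∧ N.FireSeq m' ρ m''

/-- Reachability from `m₀`. -/
def Reach (N : LNet V L) (m₀ m : V → ℕ) : Prop :=
  ∃ ρ, N.FireSeq m₀ ρ m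

/-- The observation sequence of a firing sequence (silent transitions erased). -/
def Obs (N : LNet V L) (ρ : List N.T) : List L :=
  ρ.filterMap N.label

end LNet

/-- `m₁ ⊎ m₂ ⊨ E` : the two markings are compatible and, jointly, satisfy the
constraint system `E` (i.e. `E ∧ m̲₁ ∧ m̲₂` is satisfiable: some valuation of all
the variables agrees with `m₁` on `P₁`, with `m₂` on `P₂` and satisfies `E`). -/
def JSat {V L : Type} (N₁ N₂ : LNet V L) (E : (V → ℕ) → Prop)
    (m₁ m₂ : V → ℕ) : Prop :=
  ∃ v : V → ℕ, (∀ p ∈ N₁.places, v p = m₁ p) ∧ (∀ p ∈ N₂.places, v p = m₂ p) ∧ E v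

/-- `(N₁, m₁) ⊒_E (N₂, m₂)` : `(N₂, m₂)` is an `E`-abstraction of `(N₁, m₁)`,
conditions (A1) and (A2). -/
def EAbs {V L : Type} (N₁ : LNet V L) (m₁ : V → ℕ) (N₂ : LNet V L) (m₂ : V → ℕ)
    (E : (V → ℕ) → Prop) : Prop :=
  -- (A1) the initial markings jointly satisfy `E`
  JSat N₁ N₂ E m₁ m₂ ∧
  -- (A2)
  ∀ ρ₁ m₁', N₁.FireSeq m₁ ρ₁ m₁' →
    (∃ m₂' : V → ℕ, JSat N₁ N₂ E m₁' m₂') ∧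
    ∀ m₂' : V → ℕ, JSat N₁ N₂ E m₁' m₂' →
      ∃ ρ₂ m₂'', N₂.FireSeq m₂ ρ₂ m₂'' ∧ (∀ p ∈ N₂.places, m₂'' p = m₂' p) ∧
        N₁.Obs ρ₁ = N₂.Obs ρ₂

/-- `(N₁, m₁) ▷_E (N₂, m₂)` : `E`-abstraction equivalence (abstraction in both
directions). -/
def EEquiv {V L : Type} (N₁ : LNet V L) (m₁ : V → ℕ) (N₂ : LNet V L) (m₂ : V → ℕ)
    (E : (V → ℕ) → Prop) : Prop :=
  EAbs N₁ m₁ N₂ m₂ E ∧ EAbs N₂ m₂ N₁ m₁ E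

/-- `F` is a formula whose (free) variables all belong to `S`: its truth value
only depends on the values of the variables in `S`. -/
def FormulaDependsOn {V : Type} (F : (V → ℕ) → Prop) (S : Set V) : Prop :=
  ∀ v w : V → ℕ, (∀ x ∈ S, v x = w x) → (F v ↔ F w)

/-! Rule [CONCAT].  Variables: `0 = y₁`, `1 = y₂`, `2 = x`.
Labels: `0 = a`, `1 = b`, `2 = c` (`none = τ`).
`N₁` has transitions `0 = a`, `1 = τ`, `2 = b`, `3 = c`;
`N₂` has transitions `0 = a`, `1 = b`, `2 = c`. -/

/-- The initial net of rule [CONCAT], with places `{y₁, y₂}`. -/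
def Nconcat₁ : LNet (Fin 3) (Fin 3) where
  T := Fin 4
  places := {p | p.val ≤ 1}
  Pre := ![![0, 0, 0], ![1, 0, 0], ![1, 0, 0], ![0, 1, 0]]
  Post := ![![1, 0, 0], ![0, 1, 0], ![0, 0, 0], ![0, 0, 0]]
  pre_supp := by
    intro t p hp
    simp only [Set.mem_setOf_eq, not_le] at hp
    have h3 := p.isLt
    have hp2 : p = 2 := Fin.ext (by omega)
    subst hp2
    fin_cases t <;> rfl
  post_supp := by
    intro t p hp
    simp only [Set.mem_setOf_eq, not_le] at hp
    have h3 := p.isLt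
    have hp2 : p = 2 := Fin.ext (by omega)
    subst hp2
    fin_cases t <;> rfl
  label := ![some 0, none, some 1, some 2]

/-- The reduced net of rule [CONCAT], with single place `x`. -/
def Nconcat₂ : LNet (Fin 3) (Fin 3) where
  T := Fin 3
  places := {p | p.val = 2}
  Pre := ![![0, 0, 0], ![0, 0, 1], ![0, 0, 1]]
  Post := ![![0, 0, 1], ![0, 0, 0], ![0, 0, 0]]
  pre_supp := by
    intro t p hp
    simp only [Set.mem_setOf_eq] at hp
    have h3 := p.isLt
    fin_cases p <;> simp_all <;> fin_cases t <;> rfl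
  post_supp := by
    intro t p hp
    simp only [Set.mem_setOf_eq] at hp
    have h3 := p.isLt
    fin_cases p <;> simp_all <;> fin_cases t <;> rfl
  label := ![some 0, some 1, some 2]

section Aux

lemma fireSeq_append {V L : Type} (N : LNet V L) :
    ∀ (ρ₁ : List N.T) (m m' : V → ℕ), N.FireSeq m ρ₁ m' →
    ∀ (ρ₂ : List N.T) (m'' : V → ℕ), N.FireSeq m' ρ₂ m'' →
    N.FireSeq m (ρ₁ ++ ρ₂) m'' := by
  intro ρ₁
  induction ρ₁ with
  | nil => intro m m' h ρ₂ m'' h2; cases h; exact h2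
  | cons t ρ ih =>
    rintro m m' ⟨w, hf, hs⟩ ρ₂ m'' h2
    exact ⟨w, hf, ih w m' hs ρ₂ m'' h2⟩

lemma obs_append {V L : Type} (N : LNet V L) (ρ₁ ρ₂ : List N.T) :
    N.Obs (ρ₁ ++ ρ₂) = N.Obs ρ₁ ++ N.Obs ρ₂ := by
  simp [LNet.Obs]

/-- Simulation of `N₁` by `N₂` preserving the invariant `x = y₁ + y₂`. -/
lemma simA : ∀ (ρ : List (Fin 4)) (m m' : Fin 3 → ℕ),
    Nconcat₁.FireSeq m ρ m' → ∀ n : Fin 3 → ℕ, n 2 = m 0 + m 1 →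
    ∃ (σ : List (Fin 3)) (n' : Fin 3 → ℕ),
      Nconcat₂.FireSeq n σ n' ∧ n' 2 = m' 0 + m' 1 ∧
      Nconcat₁.Obs ρ = Nconcat₂.Obs σ := by
  intro ρ
  induction ρ with
  | nil =>
    intro m m' h n hn
    cases h
    exact ⟨[], n, rfl, hn, rfl⟩
  | cons t ρ ih =>
    rintro m m'' ⟨m', ⟨hen, hstep⟩, hseq⟩ n hn
    have e0 := hstep 0; have e1 := hstep 1
    have g0 := hen 0; have g1 := hen 1
    fin_cases t
    · -- a : adds a token to y₁; fire a in N₂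
      simp [Nconcat₁, Matrix.vecHead, Matrix.vecTail] at e0 e1
      obtain ⟨σ, n', hs, hn', ho⟩ := ih m' m'' hseq
        (fun p => n p - Nconcat₂.Pre ((0:Fin 3)) p + Nconcat₂.Post ((0:Fin 3)) p)
        (by simp [Nconcat₂, Matrix.vecHead, Matrix.vecTail]; omega)
      refine ⟨(0 : Fin 3) :: σ, n', ⟨_, ⟨?_, fun p => rfl⟩, hs⟩, hn', ?_⟩
      · intro p; fin_cases p <;> simp [Nconcat₂, Matrix.vecHead, Matrix.vecTail]
      · simpa [LNet.Obs, Nconcat₁, Nconcat₂] using ho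
    · -- τ : moves a token, sum invariant; fire nothing in N₂
      simp [Nconcat₁, Matrix.vecHead, Matrix.vecTail] at e0 e1 g0
      obtain ⟨σ, n', hs, hn', ho⟩ := ih m' m'' hseq n (by omega)
      exact ⟨σ, n', hs, hn', by simpa [LNet.Obs, Nconcat₁, List.filterMap_cons] using ho⟩
    · -- b : consumes a token in y₁; fire b in N₂
      simp [Nconcat₁, Matrix.vecHead, Matrix.vecTail] at e0 e1 g0
      obtain ⟨σ, n', hs, hn', ho⟩ := ih m' m'' hseq
        (fun p => n p - Nconcat₂.Pre ((1:Fin 3)) p + Nconcat₂.Post ((1:Fin 3)) p)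
        (by simp [Nconcat₂, Matrix.vecHead, Matrix.vecTail]; omega)
      refine ⟨(1 : Fin 3) :: σ, n', ⟨_, ⟨?_, fun p => rfl⟩, hs⟩, hn', ?_⟩
      · intro p; fin_cases p <;> simp [Nconcat₂, Matrix.vecHead, Matrix.vecTail] <;> omega
      · simpa [LNet.Obs, Nconcat₁, Nconcat₂] using ho
    · -- c : consumes a token in y₂; fire c in N₂
      simp [Nconcat₁, Matrix.vecHead, Matrix.vecTail] at e0 e1 g1
      obtain ⟨σ, n', hs, hn', ho⟩ := ih m' m'' hseq
        (fun p => n p - Nconcat₂.Pre ((2:Fin 3)) p + Nconcat₂.Post ((2:Fin 3)) p)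
        (by simp [Nconcat₂, Matrix.vecHead, Matrix.vecTail]; omega)
      refine ⟨(2 : Fin 3) :: σ, n', ⟨_, ⟨?_, fun p => rfl⟩, hs⟩, hn', ?_⟩
      · intro p; fin_cases p <;> simp [Nconcat₂, Matrix.vecHead, Matrix.vecTail] <;> omega
      · simpa [LNet.Obs, Nconcat₁, Nconcat₂] using ho

/-- Simulation of `N₂` by `N₁`, keeping `y₂ = 0` and `y₁ = x`. -/
lemma simB : ∀ (σ : List (Fin 3)) (n n' : Fin 3 → ℕ),
    Nconcat₂.FireSeq n σ n' → ∀ m : Fin 3 → ℕ, m 0 = n 2 → m 1 = 0 →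
    ∃ (ρ : List (Fin 4)) (m' : Fin 3 → ℕ),
      Nconcat₁.FireSeq m ρ m' ∧ m' 0 = n' 2 ∧ m' 1 = 0 ∧
      Nconcat₂.Obs σ = Nconcat₁.Obs ρ := by
  intro σ
  induction σ with
  | nil =>
    intro n n' h m hm0 hm1
    cases h
    exact ⟨[], m, rfl, hm0, hm1, rfl⟩
  | cons t σ ih =>
    rintro n n'' ⟨n', ⟨hen, hstep⟩, hseq⟩ m hm0 hm1
    have e2 := hstep 2
    have g2 := hen 2
    fin_cases t
    · -- a in N₂: fire a in N₁
      simp [Nconcat₂, Matrix.vecHead, Matrix.vecTail] at e2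
      obtain ⟨ρ, m', hs, h0, h1, ho⟩ := ih n' n'' hseq
        (fun p => m p - Nconcat₁.Pre ((0:Fin 4)) p + Nconcat₁.Post ((0:Fin 4)) p)
        (by simp [Nconcat₁, Matrix.vecHead, Matrix.vecTail]; omega) (by simp [Nconcat₁, Matrix.vecHead, Matrix.vecTail]; omega)
      refine ⟨(0 : Fin 4) :: ρ, m', ⟨_, ⟨?_, fun p => rfl⟩, hs⟩, h0, h1, ?_⟩
      · intro p; fin_cases p <;> simp [Nconcat₁, Matrix.vecHead, Matrix.vecTail]
      · simpa [LNet.Obs, Nconcat₁, Nconcat₂] using ho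
    · -- b in N₂: fire b in N₁
      simp [Nconcat₂, Matrix.vecHead, Matrix.vecTail] at e2 g2
      obtain ⟨ρ, m', hs, h0, h1, ho⟩ := ih n' n'' hseq
        (fun p => m p - Nconcat₁.Pre ((2:Fin 4)) p + Nconcat₁.Post ((2:Fin 4)) p)
        (by simp [Nconcat₁, Matrix.vecHead, Matrix.vecTail]; omega) (by simp [Nconcat₁, Matrix.vecHead, Matrix.vecTail]; omega)
      refine ⟨(2 : Fin 4) :: ρ, m', ⟨_, ⟨?_, fun p => rfl⟩, hs⟩, h0, h1, ?_⟩
      · intro p; fin_cases p <;> simp [Nconcat₁, Matrix.vecHead, Matrix.vecTail] <;> omega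
      · simpa [LNet.Obs, Nconcat₁, Nconcat₂] using ho
    · -- c in N₂: fire τ then c in N₁
      simp [Nconcat₂, Matrix.vecHead, Matrix.vecTail] at e2 g2
      -- intermediate marking after τ
      set w : Fin 3 → ℕ := fun p => m p - Nconcat₁.Pre ((1:Fin 4)) p + Nconcat₁.Post ((1:Fin 4)) p with hw
      obtain ⟨ρ, m', hs, h0, h1, ho⟩ := ih n' n'' hseq
        (fun p => w p - Nconcat₁.Pre ((3:Fin 4)) p + Nconcat₁.Post ((3:Fin 4)) p)
        (by simp [hw, Nconcat₁, Matrix.vecHead, Matrix.vecTail]; omega) (by simp [hw, Nconcat₁, Matrix.vecHead, Matrix.vecTail]; omega)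
      refine ⟨(1 : Fin 4) :: (3 : Fin 4) :: ρ, m',
        ⟨w, ⟨?_, fun p => rfl⟩, _, ⟨?_, fun p => rfl⟩, hs⟩, h0, h1, ?_⟩
      · intro p; fin_cases p <;> simp [Nconcat₁, Matrix.vecHead, Matrix.vecTail] <;> omega
      · intro p; fin_cases p <;> simp [hw, Nconcat₁, Matrix.vecHead, Matrix.vecTail] <;> omega
      · simpa [LNet.Obs, Nconcat₁, Nconcat₂, List.filterMap_cons] using ho

/-- Firing `k` silent transitions moves `k` tokens from `y₁` to `y₂`. -/
lemma simC : ∀ (k : ℕ) (m : Fin 3 → ℕ), k ≤ m 0 →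
    ∃ m' : Fin 3 → ℕ,
      Nconcat₁.FireSeq m (List.replicate k (1 : Fin 4)) m' ∧
      m' 0 = m 0 - k ∧ m' 1 = m 1 + k := by
  intro k
  induction k with
  | zero => intro m _; exact ⟨m, rfl, by omega, by omega⟩
  | succ k ih =>
    intro m hk
    set w : Fin 3 → ℕ := fun p => m p - Nconcat₁.Pre ((1:Fin 4)) p + Nconcat₁.Post ((1:Fin 4)) p with hw
    have hw0 : w 0 = m 0 - 1 := by simp [hw, Nconcat₁, Matrix.vecHead, Matrix.vecTail]
    have hw1 : w 1 = m 1 + 1 := by simp [hw, Nconcat₁, Matrix.vecHead, Matrix.vecTail]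
    obtain ⟨m', hs, h0, h1⟩ := ih w (by omega)
    refine ⟨m', ⟨w, ⟨?_, fun p => rfl⟩, hs⟩, by omega, by omega⟩
    intro p; fin_cases p <;> simp [Nconcat₁, Matrix.vecHead, Matrix.vecTail] <;> omega

lemma obs_replicate_tau (k : ℕ) :
    Nconcat₁.Obs (List.replicate k (1 : Fin 4)) = [] := by
  induction k with
  | zero => rfl
  | succ k ih => simpa [LNet.Obs, Nconcat₁, List.replicate_succ] using ih

end Aux

/-- (Correctness of rule [CONCAT].)  With initial markings `m₁(y₁) = K`,
`m₁(y₂) = 0` and `m₂(x) = K`, we have `(N₁, m₁) ▷_E (N₂, m₂)` where `E` is the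
single equation `x = y₁ + y₂`. -/
theorem concat_correct (K : ℕ) (m₁ m₂ : Fin 3 → ℕ)
    (h₁ : m₁ 0 = K) (h₂ : m₁ 1 = 0) (h₃ : m₂ 2 = K) :
    EEquiv Nconcat₁ m₁ Nconcat₂ m₂ (fun v => v 2 = v 0 + v 1) := by
  have hplace1 : ∀ p : Fin 3, p ∈ Nconcat₁.places ↔ (p = 0 ∨ p = 1) := by
    intro p
    constructor
    · intro hp
      simp only [Nconcat₁, Set.mem_setOf_eq] at hp
      have := p.isLt
      rcases Nat.lt_or_ge p.val 1 with h | h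
      · left; exact Fin.ext (by omega)
      · right; exact Fin.ext (by omega)
    · rintro (rfl | rfl) <;> simp [Nconcat₁, Matrix.vecHead, Matrix.vecTail]
  have hplace2 : ∀ p : Fin 3, p ∈ Nconcat₂.places ↔ p = 2 := by
    intro p
    constructor
    · intro hp
      simp only [Nconcat₂, Set.mem_setOf_eq] at hp
      exact Fin.ext (by omega)
    · rintro rfl; simp [Nconcat₂, Matrix.vecHead, Matrix.vecTail]
  -- extracting the numeric content of JSat, both directions
  have hJ12 : ∀ a b : Fin 3 → ℕ,
      JSat Nconcat₁ Nconcat₂ (fun v => v 2 = v 0 + v 1) a b ↔ b 2 = a 0 + a 1 := by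
    intro a b
    constructor
    · rintro ⟨v, hv1, hv2, hE⟩
      rw [← hv2 2 ((hplace2 2).2 rfl), ← hv1 0 ((hplace1 0).2 (Or.inl rfl)),
        ← hv1 1 ((hplace1 1).2 (Or.inr rfl))]
      exact hE
    · intro h
      refine ⟨![a 0, a 1, b 2], ?_, ?_, ?_⟩
      · intro p hp; rcases (hplace1 p).1 hp with rfl | rfl <;> simp
      · intro p hp; rcases (hplace2 p).1 hp with rfl; simp
      · simpa using h
  have hJ21 : ∀ b a : Fin 3 → ℕ,
      JSat Nconcat₂ Nconcat₁ (fun v => v 2 = v 0 + v 1) b a ↔ b 2 = a 0 + a 1 := by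
    intro b a
    constructor
    · rintro ⟨v, hv2, hv1, hE⟩
      rw [← hv2 2 ((hplace2 2).2 rfl), ← hv1 0 ((hplace1 0).2 (Or.inl rfl)),
        ← hv1 1 ((hplace1 1).2 (Or.inr rfl))]
      exact hE
    · intro h
      refine ⟨![a 0, a 1, b 2], ?_, ?_, ?_⟩
      · intro p hp; rcases (hplace2 p).1 hp with rfl; simp
      · intro p hp; rcases (hplace1 p).1 hp with rfl | rfl <;> simp
      · simpa using h
  constructor
  · -- EAbs N₁ N₂
    constructor
    · exact (hJ12 m₁ m₂).2 (by omega)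
    · intro ρ₁ m₁' hfs
      constructor
      · exact ⟨![0, 0, m₁' 0 + m₁' 1], (hJ12 m₁' _).2 (by simp)⟩
      · intro m₂' hJ
        have hval : m₂' 2 = m₁' 0 + m₁' 1 := (hJ12 m₁' m₂').1 hJ
        obtain ⟨σ, n', hs, hn', ho⟩ := simA ρ₁ m₁ m₁' hfs m₂ (by omega)
        refine ⟨σ, n', hs, ?_, ho⟩
        intro p hp
        rcases (hplace2 p).1 hp with rfl
        omega
  · -- EAbs N₂ N₁
    constructor
    · exact (hJ21 m₂ m₁).2 (by omega)
    · intro ρ₂ n' hfs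
      constructor
      · exact ⟨![n' 2, 0, 0], (hJ21 n' _).2 (by simp)⟩
      · intro m₁' hJ
        have hval : n' 2 = m₁' 0 + m₁' 1 := (hJ21 n' m₁').1 hJ
        obtain ⟨ρ, m', hs, h0, h1, ho⟩ := simB ρ₂ m₂ n' hfs m₁ (by omega) h₂
        obtain ⟨m'', hs2, h0', h1'⟩ := simC (m₁' 1) m' (by omega)
        refine ⟨ρ ++ List.replicate (m₁' 1) (1 : Fin 4), m'',
          fireSeq_append _ ρ m₁ m' hs _ m'' hs2, ?_, ?_⟩
        · intro p hp
          rcases (hplace1 p).1 hp with rfl | rfl <;> omega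
        · rw [ho]
          exact ((obs_append Nconcat₁ ρ (List.replicate (m₁' 1) (1 : Fin 4))).trans
            (by rw [obs_replicate_tau, List.append_nil] :
              Nconcat₁.Obs ρ ++ Nconcat₁.Obs (List.replicate (m₁' 1) (1 : Fin 4)) = Nconcat₁.Obs ρ)).symm
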